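/- arXiv:1510.05987 — 2 statements merged into one kernel-verified Lean document; each statement's English description precedes it below -/
import Mathlib

section
/- (Gaussian integral representation of the Fourier coefficient) Let χ = (r₁^{a₁},…,r_k^{a_k}) with r₁,…,r_k ∈ (1/n)ℤ/ℤ distinct and ∑ aᵢ = n, and let S be the set of injective n-tuples in (ℤ/nℤ)ⁿ. Then nⁿ · \widehat{1_S}(χ) = ∫_{ℂ^k} z₁^{a₁}⋯z_k^{a_k} · ∏_{x ∈ ℤ/nℤ} (∑_{i=1}^k e(−rᵢx) \overline{zᵢ}) dγ, where γ is the standard complex Gaussian measure on ℂ^k. -/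
open Finset

/-- `e(x) = exp(2πi x/n)` for `x ∈ ZMod n`, realizing the identification of the dual of
`ZMod n` with `(1/n)ℤ/ℤ`. -/
noncomputable def eZ (n : ℕ) (x : ZMod n) : ℂ :=
  Complex.exp (2 * Real.pi * Complex.I * (x.val : ℂ) / (n : ℂ))

/-- The Fourier coefficient `\widehat{1_S}(r₁,…,r_n)` of the set `S` of injective
`n`-tuples in `(ZMod n)ⁿ`, namely `n^{-n} ∑_{x ∈ S} e(-∑ᵢ rᵢ xᵢ)`. -/
noncomputable def fourierS (n : ℕ) [NeZero n] (r : Fin n → ZMod n) : ℂ :=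
  ((n : ℂ) ^ n)⁻¹ *
    ∑ x ∈ Finset.univ.filter (fun x : Fin n → ZMod n => Function.Injective x),
      eZ n (-(∑ i, r i * x i))

open MeasureTheory

section helpers

lemma eZ_zero (n : ℕ) : eZ n 0 = 1 := by
  simp [eZ]

lemma eZ_add (n : ℕ) [NeZero n] (u v : ZMod n) : eZ n (u + v) = eZ n u * eZ n v := by
  have hn : (n : ℂ) ≠ 0 := by exact_mod_cast (NeZero.ne n)
  obtain ⟨q, hq⟩ : ∃ q : ℕ, u.val + v.val = (u + v).val + n * q :=
    ⟨(u.val + v.val) / n, by rw [ZMod.val_add]; exact (Nat.mod_add_div _ _).symm⟩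
  have hqc : (u.val : ℂ) + v.val = ((u + v).val : ℂ) + n * q := by exact_mod_cast hq
  rw [eZ, eZ, eZ, ← Complex.exp_add, Complex.exp_eq_exp_iff_exists_int]
  refine ⟨-(q : ℤ), ?_⟩
  set A := ((u + v).val : ℂ) with hA
  set B := ((u).val : ℂ) with hB
  set C := ((v).val : ℂ) with hC
  push_cast
  linear_combination (-(2 * (Real.pi : ℂ) * Complex.I) * (n:ℂ)⁻¹) * hqc +
    (-(2 * (Real.pi : ℂ) * Complex.I * q)) * (mul_inv_cancel₀ hn)

lemma eZ_sum {ι : Type*} (n : ℕ) [NeZero n] (t : Finset ι) (u : ι → ZMod n) :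
    eZ n (∑ i ∈ t, u i) = ∏ i ∈ t, eZ n (u i) := by
  classical
  induction t using Finset.cons_induction with
  | empty => simp [eZ_zero]
  | cons a t ha ih => rw [Finset.sum_cons, Finset.prod_cons, eZ_add, ih]

section counting
variable {α β ι : Type*} [DecidableEq ι]

def restrictFiberEquiv (g : α → ι) (f : β → ι) (σ : α ≃ β) (h : ∀ y, g (σ.symm y) = f y)
    (i : ι) : {x // g x = i} ≃ {y // f y = i} where
  toFun x := ⟨σ x.1, by rw [← h (σ x.1), Equiv.symm_apply_apply]; exact x.2⟩
  invFun y := ⟨σ.symm y.1, by rw [h]; exact y.2⟩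
  left_inv x := by ext; simp
  right_inv y := by ext; simp

def glueFiberEquiv (g : α → ι) (f : β → ι) :
    {σ : α ≃ β // ∀ y, g (σ.symm y) = f y} ≃ ∀ i, ({x // g x = i} ≃ {y // f y = i}) where
  toFun σ := restrictFiberEquiv g f σ.1 σ.2
  invFun e := ⟨(Equiv.sigmaFiberEquiv g).symm.trans
      ((Equiv.sigmaCongrRight e).trans (Equiv.sigmaFiberEquiv f)), by
    intro y
    have : ((Equiv.sigmaFiberEquiv g).symm.trans
        ((Equiv.sigmaCongrRight e).trans (Equiv.sigmaFiberEquiv f))).symm y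
        = ((e (f y)).symm ⟨y, rfl⟩).1 := by
      simp [Equiv.sigmaFiberEquiv, Equiv.sigmaCongrRight]
    rw [this]
    exact ((e (f y)).symm ⟨y, rfl⟩).2⟩
  left_inv σ := by
    apply Subtype.ext
    apply Equiv.ext
    intro x
    rfl
  right_inv e := by
    funext i
    apply Equiv.ext
    intro x
    apply Subtype.ext
    obtain ⟨x, hx⟩ := x
    subst hx
    rfl

lemma card_equiv_ite (α β : Type*) [Fintype α] [Fintype β] [DecidableEq α] [DecidableEq β] :
    Fintype.card (α ≃ β) =
      if Fintype.card α = Fintype.card β then (Fintype.card α).factorial else 0 := by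
  split
  · exact Fintype.card_equiv (Fintype.equivOfCardEq ‹_›)
  · rw [Fintype.card_eq_zero_iff]
    exact ⟨fun e => ‹¬_› (Fintype.card_congr e)⟩

lemma card_compatible_equiv [Fintype α] [Fintype β] [Fintype ι] [DecidableEq α] [DecidableEq β]
    (g : α → ι) (f : β → ι) :
    Fintype.card {σ : α ≃ β // ∀ y, g (σ.symm y) = f y} =
      ∏ i, if (univ.filter fun x => g x = i).card = (univ.filter fun y => f y = i).card
        then (univ.filter fun x => g x = i).card.factorial else 0 := by
  rw [Fintype.card_congr (glueFiberEquiv g f), Fintype.card_pi]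
  refine Finset.prod_congr rfl fun i _ => ?_
  rw [card_equiv_ite, Fintype.card_subtype, Fintype.card_subtype]

end counting

open Real Set in
lemma integrable_moment (a b : ℕ) :
    Integrable (fun w : ℂ =>
      ((Real.pi⁻¹ * Real.exp (-(‖w‖ ^ 2))) : ℝ) • (w ^ a * (starRingEnd ℂ) w ^ b)) := by
  have hmeas : AEStronglyMeasurable (fun w : ℂ =>
      ((Real.pi⁻¹ * Real.exp (-(‖w‖ ^ 2))) : ℝ) • (w ^ a * (starRingEnd ℂ) w ^ b))
      volume := by
    apply Continuous.aestronglyMeasurable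
    apply Continuous.smul (f := fun w : ℂ => Real.pi⁻¹ * Real.exp (-(‖w‖ ^ 2)))
      (g := fun w : ℂ => w ^ a * (starRingEnd ℂ) w ^ b)
    · exact continuous_const.mul (Real.continuous_exp.comp (continuous_norm.pow 2).neg)
    · exact (continuous_id.pow a).mul (continuous_star.pow b)
  have hint : Integrable (fun v : ℂ =>
      Complex.exp ((-(1/2 : ℂ)) * ‖v‖^2 + (0:ℂ) * (inner ℝ (0:ℂ) v : ℝ))) :=
    GaussianFourier.integrable_cexp_neg_mul_sq_norm_add (by norm_num) 0 0
  refine (hint.norm.const_mul ((a+b).factorial * Real.exp 1)).mono' hmeas ?_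
  filter_upwards with w
  rw [norm_smul]
  have habs : ‖w‖ = ‖w‖ := rfl
  have h0 : ‖w ^ a * (starRingEnd ℂ) w ^ b‖ = ‖w‖ ^ (a + b) := by
    rw [norm_mul, norm_pow, norm_pow, RCLike.norm_conj, pow_add]
  rw [h0, habs]
  have h1 : ‖Complex.exp ((-(1/2 : ℂ)) * ‖w‖^2 + (0:ℂ) * (inner ℝ (0:ℂ) w : ℝ))‖
      = Real.exp (-(1/2) * ‖w‖^2) := by
    have he : ((-(1/2 : ℂ)) * ‖w‖^2 + (0:ℂ) * (inner ℝ (0:ℂ) w : ℝ))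
        = ((-(1/2) * ‖w‖^2 : ℝ) : ℂ) := by push_cast; ring
    rw [he, Complex.norm_exp_ofReal]
  rw [h1]
  set t := ‖w‖ with ht
  have htn : 0 ≤ t := norm_nonneg w
  have hb1 : t ^ (a+b) ≤ (a+b).factorial * Real.exp t := by
    rw [← div_le_iff₀' (by positivity : (0:ℝ) < (a+b).factorial)]
    exact Real.pow_div_factorial_le_exp _ htn (a+b)
  have hb2 : Real.exp t * Real.exp (-(t^2)) ≤ Real.exp 1 * Real.exp (-(1/2) * t^2) := by
    rw [← Real.exp_add, ← Real.exp_add]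
    apply Real.exp_le_exp.mpr
    nlinarith [sq_nonneg (t - 1)]
  have hπ : |Real.pi⁻¹ * Real.exp (-(t ^ 2))| ≤ Real.exp (-(t^2)) := by
    rw [abs_of_nonneg (by positivity)]
    have : Real.pi⁻¹ ≤ 1 := by
      rw [inv_le_one_iff₀]; right; linarith [Real.pi_gt_three]
    nlinarith [Real.exp_pos (-(t^2))]
  calc |Real.pi⁻¹ * Real.exp (-(t ^ 2))| * t ^ (a+b)
      ≤ Real.exp (-(t^2)) * ((a+b).factorial * Real.exp t) := by
        apply mul_le_mul hπ hb1 (by positivity) (by positivity)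
    _ = (a+b).factorial * (Real.exp t * Real.exp (-(t^2))) := by ring
    _ ≤ (a+b).factorial * (Real.exp 1 * Real.exp (-(1/2) * t^2)) := by
        apply mul_le_mul_of_nonneg_left hb2 (by positivity)
    _ = (a+b).factorial * Real.exp 1 * Real.exp (-(1/2) * t^2) := by ring

open Real Set in
lemma gaussian_moment (a b : ℕ) :
    ∫ w : ℂ, ((Real.pi⁻¹ * Real.exp (-(‖w‖ ^ 2))) : ℝ) • (w ^ a * (starRingEnd ℂ) w ^ b)
      = if a = b then ((a.factorial : ℕ) : ℂ) else 0 := by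
  set c : ℂ := ((a:ℂ) - b) * Complex.I with hc
  rw [← Complex.integral_comp_polarCoord_symm]
  have h1 : ∫ p in polarCoord.target,
      p.1 • (((Real.pi⁻¹ * Real.exp (-(‖Complex.polarCoord.symm p‖ ^ 2))) : ℝ) •
        ((Complex.polarCoord.symm p) ^ a * (starRingEnd ℂ) (Complex.polarCoord.symm p) ^ b))
      = ∫ p in Ioi (0:ℝ) ×ˢ Ioo (-π) π,
          (fun r : ℝ => ((r ^ (a+b+1) * (Real.pi⁻¹ * Real.exp (-(r^2))) : ℝ) : ℂ)) p.1 *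
          (fun θ : ℝ => Complex.exp (c * (θ:ℂ))) p.2 := by
    rw [polarCoord_target]
    refine setIntegral_congr_fun (measurableSet_Ioi.prod measurableSet_Ioo) (fun p hp => ?_)
    obtain ⟨hr, -⟩ := hp
    obtain ⟨r, θ⟩ := p
    simp only [] at hr ⊢
    have hw : Complex.polarCoord.symm (r, θ) = (r:ℂ) * Complex.exp ((θ:ℂ) * Complex.I) := by
      rw [Complex.polarCoord_symm_apply, Complex.exp_mul_I, ← Complex.ofReal_cos,
        ← Complex.ofReal_sin]
    have habs : ‖Complex.polarCoord.symm (r, θ)‖ = r := by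
      rw [Complex.norm_polarCoord_symm, abs_of_pos hr]
    have hconj : (starRingEnd ℂ) (Complex.polarCoord.symm (r, θ))
        = (r:ℂ) * Complex.exp (-((θ:ℂ) * Complex.I)) := by
      rw [hw, map_mul, Complex.conj_ofReal, ← Complex.exp_conj, map_mul, Complex.conj_ofReal,
        Complex.conj_I, mul_neg]
    rw [habs]
    rw [hconj]
    conv_lhs => rw [hw]
    rw [mul_pow, mul_pow, ← Complex.exp_nat_mul, ← Complex.exp_nat_mul]
    rw [Complex.real_smul, Complex.real_smul]
    have hee : Complex.exp ((a:ℂ) * ((θ:ℂ) * Complex.I)) *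
        Complex.exp ((b:ℂ) * -((θ:ℂ) * Complex.I)) = Complex.exp (c * (θ:ℂ)) := by
      rw [← Complex.exp_add, hc]; ring_nf
    push_cast
    rw [← hee]
    ring
  rw [h1, Measure.volume_eq_prod]
  rw [setIntegral_prod_mul (μ := (volume : Measure ℝ)) (ν := (volume : Measure ℝ))
    (fun r : ℝ => ((r ^ (a+b+1) * (Real.pi⁻¹ * Real.exp (-(r^2))) : ℝ) : ℂ))
    (fun θ : ℝ => Complex.exp (c * (θ:ℂ))) (Ioi (0:ℝ)) (Ioo (-π) π)]
  have hF : (∫ r in Ioi (0:ℝ), ((r ^ (a+b+1) * (Real.pi⁻¹ * Real.exp (-(r^2))) : ℝ) : ℂ))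
      = ((Real.pi⁻¹ * ((1/2) * Real.Gamma ((a+b+2)/2)) : ℝ) : ℂ) := by
    have hcast : (∫ r in Ioi (0:ℝ), ((r ^ (a+b+1) * (Real.pi⁻¹ * Real.exp (-(r^2))) : ℝ) : ℂ))
        = ((∫ r in Ioi (0:ℝ), r ^ (a+b+1) * (Real.pi⁻¹ * Real.exp (-(r^2))) : ℝ) : ℂ) :=
      integral_ofReal
    rw [hcast]
    norm_cast
    have heq : ∀ r ∈ Ioi (0:ℝ), r ^ (a+b+1) * (Real.pi⁻¹ * Real.exp (-(r^2)))
        = Real.pi⁻¹ * (r ^ (((a:ℝ)+b+1)) * Real.exp (-(r ^ (2:ℝ)))) := by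
      intro r hr
      rw [Real.rpow_two]
      rw [show ((a:ℝ)+b+1) = (((a+b+1 : ℕ)):ℝ) by push_cast; ring, Real.rpow_natCast]
      ring
    rw [setIntegral_congr_fun measurableSet_Ioi heq, integral_const_mul,
      integral_rpow_mul_exp_neg_rpow two_pos
        (by have h1 : (0:ℝ) ≤ (a:ℝ) := Nat.cast_nonneg a
            have h2 : (0:ℝ) ≤ (b:ℝ) := Nat.cast_nonneg b
            linarith)]
    rw [show ((a:ℝ)+b+1+1)/2 = ((a:ℝ)+b+2)/2 by ring]
    push_cast
    ring
  rw [hF]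
  by_cases h : a = b
  · subst h
    have hc0 : c = 0 := by rw [hc]; ring
    simp only [hc0, zero_mul, Complex.exp_zero]
    rw [setIntegral_const,
      Real.volume_real_Ioo_of_le (by linarith [Real.pi_pos] : -π ≤ π)]
    have hΓ : ((a:ℝ)+a+2)/2 = (a:ℝ) + 1 := by ring
    rw [hΓ, Real.Gamma_nat_eq_factorial, Complex.real_smul]
    split_ifs with h'
    · rw [mul_one, ← Complex.ofReal_mul,
        show (Real.pi⁻¹ * (1/2 * (a.factorial:ℝ))) * (π - -π) = (a.factorial:ℝ) by
          rw [show Real.pi⁻¹ * (1/2 * (a.factorial:ℝ)) * (π - -π)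
              = (a.factorial:ℝ) * (π * Real.pi⁻¹) by ring,
            mul_inv_cancel₀ Real.pi_ne_zero, mul_one]]
      norm_cast
    · simp at h'
  · rw [if_neg h]
    have hc0 : c ≠ 0 := by
      rw [hc]
      apply mul_ne_zero _ Complex.I_ne_zero
      rw [sub_ne_zero]
      exact_mod_cast fun hh => h (Nat.cast_injective hh)
    have hθ : (∫ θ in Ioo (-π) π, Complex.exp (c * (θ:ℂ))) = 0 := by
      rw [← integral_Ioc_eq_integral_Ioo,
        ← intervalIntegral.integral_of_le (by linarith [Real.pi_pos] : -π ≤ π),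
        integral_exp_mul_complex hc0]
      have hd : ∃ d : ℤ, ((a:ℂ) - b) = (d:ℂ) := ⟨(a:ℤ) - b, by push_cast; ring⟩
      obtain ⟨d, hd⟩ := hd
      have he1 : Complex.exp (c * (π:ℂ)) = ((-1 : ℂ)) ^ d := by
        rw [hc, hd, mul_assoc, mul_comm Complex.I (π:ℂ), Complex.exp_int_mul,
          Complex.exp_pi_mul_I]
      have he2 : Complex.exp (c * ((-π:ℝ):ℂ)) = ((-1 : ℂ)) ^ d := by
        rw [hc, hd]
        rw [show (d:ℂ) * Complex.I * ((-π:ℝ):ℂ) = (-d : ℤ) * ((π:ℂ) * Complex.I) by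
          push_cast; ring]
        rw [Complex.exp_int_mul, Complex.exp_pi_mul_I, zpow_neg]
        have hsq : ((-1 : ℂ)) ^ d * ((-1 : ℂ)) ^ d = 1 := by
          rw [← zpow_add₀ (by norm_num : (-1 : ℂ) ≠ 0), show d + d = 2 * d by ring, zpow_mul]
          norm_num
        rw [inv_eq_of_mul_eq_one_left hsq]
      rw [he1, he2, sub_self, zero_div]
    rw [hθ, mul_zero]

end helpers

/-- Gaussian integral representation: for `χ = (r₁^{a₁},…,r_k^{a_k})` with distinct
values `s i` of multiplicities `a i`,
`nⁿ \widehat{1_S}(χ) = ∫ z₁^{a₁}⋯z_k^{a_k} ∏_{x∈ZMod n} (∑ᵢ e(−sᵢx) conj zᵢ) dγ`. -/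
theorem fourierS_gaussian_representation (n k : ℕ) [NeZero n] (a : Fin k → ℕ)
    (s : Fin k → ZMod n) (hs : Function.Injective s) (ha : ∑ i, a i = n)
    (χ : Fin n → ZMod n)
    (hcount : ∀ i, (Finset.univ.filter (fun j => χ j = s i)).card = a i)
    (hcover : ∀ j, ∃ i, χ j = s i) :
    (n : ℂ) ^ n * fourierS n χ =
      ∫ z : Fin k → ℂ,
        ((Real.pi⁻¹ ^ k * Real.exp (-(∑ i, ‖z i‖ ^ 2))) : ℝ) •
          ((∏ i, (z i) ^ (a i)) *
            ∏ x : ZMod n, ∑ i, eZ n (-(s i * x)) * (starRingEnd ℂ) (z i)) := by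
  classical
  set W : (ZMod n → Fin k) → ℂ := fun f => ∏ x : ZMod n, eZ n (-(s (f x) * x)) with hW
  set bf : (ZMod n → Fin k) → Fin k → ℕ :=
    fun f i => (Finset.univ.filter fun y => f y = i).card with hbf
  choose g hgspec using hcover
  have hgcount : ∀ i, (univ.filter fun j => g j = i).card = a i := by
    intro i
    rw [← hcount i]
    refine congrArg Finset.card (Finset.filter_congr fun j _ => ?_)
    constructor
    · rintro rfl; exact hgspec j
    · intro h; exact hs ((hgspec j).symm.trans h)
  -- RHS computation
  have hRHS : (∫ z : Fin k → ℂ,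
        ((Real.pi⁻¹ ^ k * Real.exp (-(∑ i, ‖z i‖ ^ 2))) : ℝ) •
          ((∏ i, (z i) ^ (a i)) *
            ∏ x : ZMod n, ∑ i, eZ n (-(s i * x)) * (starRingEnd ℂ) (z i)))
      = ∑ f : ZMod n → Fin k,
          (∏ i, if a i = bf f i then (((a i).factorial : ℕ) : ℂ) else 0) * W f := by
    have hpt : ∀ z : Fin k → ℂ,
        ((Real.pi⁻¹ ^ k * Real.exp (-(∑ i, ‖z i‖ ^ 2))) : ℝ) •
          ((∏ i, (z i) ^ (a i)) *
            ∏ x : ZMod n, ∑ i, eZ n (-(s i * x)) * (starRingEnd ℂ) (z i))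
        = ∑ f : ZMod n → Fin k, W f * ∏ i,
            (((Real.pi⁻¹ * Real.exp (-(‖z i‖ ^ 2))) : ℝ) •
              ((z i) ^ (a i) * (starRingEnd ℂ) (z i) ^ (bf f i))) := by
      intro z
      rw [Finset.prod_univ_sum (fun _ : ZMod n => (univ : Finset (Fin k)))
        (fun x i => eZ n (-(s i * x)) * (starRingEnd ℂ) (z i)), Fintype.piFinset_univ]
      rw [Finset.mul_sum, Finset.smul_sum]
      refine Finset.sum_congr rfl fun f _ => ?_
      have hsplit : ∏ x : ZMod n, eZ n (-(s (f x) * x)) * (starRingEnd ℂ) (z (f x))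
          = W f * ∏ i, (starRingEnd ℂ) (z i) ^ (bf f i) := by
        rw [Finset.prod_mul_distrib, hW]
        congr 1
        rw [← Finset.prod_fiberwise' univ f (fun i => (starRingEnd ℂ) (z i))]
        exact Finset.prod_congr rfl fun i _ => by rw [Finset.prod_const, hbf]
      rw [hsplit]
      have hD : ((Real.pi⁻¹ ^ k * Real.exp (-(∑ i, ‖z i‖ ^ 2))) : ℝ)
          = ∏ i, (Real.pi⁻¹ * Real.exp (-(‖z i‖ ^ 2))) := by
        rw [← Finset.sum_neg_distrib, Real.exp_sum, Finset.prod_mul_distrib, Finset.prod_const,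
          Finset.card_univ, Fintype.card_fin]
      simp only [Complex.real_smul]
      rw [hD]
      push_cast
      simp only [Finset.prod_mul_distrib]
      ring
    simp_rw [hpt]
    rw [integral_finset_sum]
    · refine Finset.sum_congr rfl fun f _ => ?_
      rw [integral_const_mul]
      rw [volume_pi]
      rw [integral_fintype_prod_eq_prod (ι := Fin k) (fun i (w : ℂ) =>
        ((Real.pi⁻¹ * Real.exp (-(‖w‖ ^ 2))) : ℝ) •
          (w ^ (a i) * (starRingEnd ℂ) w ^ (bf f i)))]
      rw [mul_comm]
      congr 1
      exact Finset.prod_congr rfl fun i _ => gaussian_moment (a i) (bf f i)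
    · intro f _
      exact (Integrable.fintype_prod
        (fun i => integrable_moment (a i) (bf f i))).const_mul (W f)
  -- LHS computation
  have hpow : ((n:ℂ)^n) ≠ 0 := pow_ne_zero _ (Nat.cast_ne_zero.mpr (NeZero.ne n))
  have hstep1 : ∑ x ∈ univ.filter (fun x : Fin n → ZMod n => Function.Injective x),
      eZ n (-(∑ i, χ i * x i)) = ∑ σ : Fin n ≃ ZMod n, W (fun y => g (σ.symm y)) := by
    rw [eq_comm]
    refine Finset.sum_bij (fun (σ : Fin n ≃ ZMod n) _ => (σ : Fin n → ZMod n)) ?_ ?_ ?_ ?_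
    · intro σ _
      rw [Finset.mem_filter]
      exact ⟨Finset.mem_univ _, σ.injective⟩
    · intro σ1 _ σ2 _ h
      exact Equiv.coe_fn_injective h
    · intro x hx
      have hinj := (Finset.mem_filter.mp hx).2
      have hbij : Function.Bijective x :=
        (Fintype.bijective_iff_injective_and_card x).mpr ⟨hinj, by simp [ZMod.card]⟩
      exact ⟨Equiv.ofBijective x hbij, Finset.mem_univ _, rfl⟩
    · intro σ _
      have h1 : ∑ i, χ i * σ i = ∑ y : ZMod n, s (g (σ.symm y)) * y := by
        rw [← Equiv.sum_comp σ (fun y => s (g (σ.symm y)) * y)]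
        exact Finset.sum_congr rfl fun j _ => by rw [Equiv.symm_apply_apply, ← hgspec j]
      rw [hW]
      simp only []
      rw [h1, ← Finset.sum_neg_distrib, eZ_sum]
  have hstep2 : ∑ σ : Fin n ≃ ZMod n, W (fun y => g (σ.symm y))
      = ∑ f : ZMod n → Fin k, ((univ.filter fun σ : Fin n ≃ ZMod n =>
          (fun y => g (σ.symm y)) = f).card : ℂ) * W f := by
    rw [← Finset.sum_fiberwise' univ (fun σ : Fin n ≃ ZMod n => (fun y => g (σ.symm y))) W]
    refine Finset.sum_congr rfl fun f _ => ?_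
    rw [Finset.sum_const, nsmul_eq_mul]
  have hcard : ∀ f : ZMod n → Fin k,
      (univ.filter fun σ : Fin n ≃ ZMod n => (fun y => g (σ.symm y)) = f).card
      = ∏ i, if a i = bf f i then (a i).factorial else 0 := by
    intro f
    rw [← Fintype.card_subtype]
    rw [Fintype.card_congr (Equiv.subtypeEquivRight
      (q := fun σ : Fin n ≃ ZMod n => ∀ y, g (σ.symm y) = f y) (fun σ => funext_iff))]
    rw [card_compatible_equiv g f]
    refine Finset.prod_congr rfl fun i _ => ?_
    rw [hgcount i]
  rw [hRHS, fourierS, ← mul_assoc, mul_inv_cancel₀ hpow, one_mul, hstep1, hstep2]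
  refine Finset.sum_congr rfl fun f _ => ?_
  rw [hcard f]
  simp only [Nat.cast_prod, Nat.cast_ite, Nat.cast_zero]
end

section
/- (Parseval for sparse characters, crude form) Let S be the injective tuples in (ℤ/nℤ)ⁿ and m ≤ n. Then ∑_{χ with at most m nonzero coordinates} |\widehat{1_S}(χ)|² ≤ (n^m/m!) · (n!/nⁿ)². -/
open Finset

lemma eZ_eq_stdAddChar (n : ℕ) [NeZero n] (x : ZMod n) : eZ n x = ZMod.stdAddChar x := by
  rw [ZMod.stdAddChar_apply, ZMod.toCircle_apply, eZ]

lemma conj_stdAddChar (n : ℕ) [NeZero n] (x : ZMod n) :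
    (starRingEnd ℂ) (ZMod.stdAddChar x) = ZMod.stdAddChar (-x) := by
  rw [ZMod.stdAddChar_apply, ← Circle.coe_inv_eq_conj, ← AddChar.map_neg_eq_inv,
    ZMod.stdAddChar_apply]

lemma addChar_map_sum {ι : Type*} (n : ℕ) [NeZero n] (s : Finset ι) (f : ι → ZMod n) :
    ZMod.stdAddChar (∑ i ∈ s, f i) = ∏ i ∈ s, ZMod.stdAddChar (f i) := by
  classical
  induction s using Finset.cons_induction with
  | empty => simp
  | cons a s ha ih => rw [Finset.sum_cons, Finset.prod_cons, AddChar.map_add_eq_mul, ih]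

lemma sum_supported (n : ℕ) [NeZero n] (T : Finset (Fin n)) (d : Fin n → ZMod n) :
    ∑ r ∈ Finset.univ.filter (fun r : Fin n → ZMod n => ∀ i ∉ T, r i = 0),
      ZMod.stdAddChar (∑ i, r i * d i)
      = if ∀ i ∈ T, d i = 0 then (n : ℂ) ^ T.card else 0 := by
  classical
  have hset : Finset.univ.filter (fun r : Fin n → ZMod n => ∀ i ∉ T, r i = 0)
      = Fintype.piFinset (fun i => if i ∈ T then (univ : Finset (ZMod n)) else {0}) := by
    ext r
    simp only [mem_filter, mem_univ, true_and, Fintype.mem_piFinset]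
    constructor
    · intro h i
      by_cases hi : i ∈ T <;> simp [hi, h i]
    · intro h i hi
      have := h i
      simpa [hi] using this
  rw [hset]
  have : ∀ r ∈ Fintype.piFinset (fun i : Fin n => if i ∈ T then (univ : Finset (ZMod n)) else {0}),
      ZMod.stdAddChar (∑ i, r i * d i) = ∏ i, ZMod.stdAddChar (r i * d i) := by
    intro r _
    exact addChar_map_sum n univ _
  rw [Finset.sum_congr rfl this,
    ← Finset.prod_univ_sum (fun i : Fin n => if i ∈ T then (univ : Finset (ZMod n)) else {0})
      (fun i c => ZMod.stdAddChar (c * d i))]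
  have : ∀ i : Fin n,
      (∑ c ∈ (if i ∈ T then (univ : Finset (ZMod n)) else {0}), ZMod.stdAddChar (c * d i))
      = if i ∈ T then (if d i = 0 then (n : ℂ) else 0) else 1 := by
    intro i
    by_cases hi : i ∈ T
    · simp only [hi, if_true]
      rw [AddChar.sum_mulShift (d i) (ZMod.isPrimitive_stdAddChar n)]
      simp [ZMod.card]
    · simp [hi]
  rw [Finset.prod_congr rfl (fun i _ => this i), Finset.prod_ite_mem, Finset.univ_inter]
  by_cases h : ∀ i ∈ T, d i = 0
  · rw [if_pos h, Finset.prod_congr rfl (fun i hi => if_pos (h i hi)), Finset.prod_const]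
  · rw [if_neg h]
    push_neg at h
    obtain ⟨i, hi, hdi⟩ := h
    exact Finset.prod_eq_zero hi (if_neg hdi)

lemma card_inj_tuples (n : ℕ) [NeZero n] :
    (Finset.univ.filter (fun x : Fin n → ZMod n => Function.Injective x)).card
      = n.factorial := by
  classical
  rw [← Fintype.card_subtype]
  rw [Fintype.card_congr (Equiv.subtypeInjectiveEquivEmbedding (Fin n) (ZMod n))]
  rw [Fintype.card_embedding_eq]
  simp [ZMod.card, Nat.descFactorial_self]

lemma card_inj_ext (n : ℕ) [NeZero n] (T : Finset (Fin n)) (x : Fin n → ZMod n)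
    (hx : Function.Injective x) :
    (Finset.univ.filter (fun y : Fin n → ZMod n =>
        Function.Injective y ∧ ∀ i ∈ T, y i = x i)).card = (n - T.card).factorial := by
  classical
  rw [← Fintype.card_subtype]
  have e : {y : Fin n → ZMod n // Function.Injective y ∧ ∀ i ∈ T, y i = x i}
      ≃ ((↥(Tᶜ)) ↪ ↥((T.image x)ᶜ)) :=
    { toFun := fun y =>
        ⟨fun i => ⟨y.1 i.1, by
          rcases y with ⟨y, hy, hag⟩
          rcases i with ⟨i, hi⟩
          rw [Finset.mem_compl] at hi ⊢
          rintro hmem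
          rw [Finset.mem_image] at hmem
          obtain ⟨j, hj, hxj⟩ := hmem
          have : y j = y i := by rw [hag j hj, hxj]
          exact hi (hy this ▸ hj)⟩, by
        rintro ⟨i, hi⟩ ⟨j, hj⟩ hij
        have : y.1 i = y.1 j := congrArg Subtype.val hij
        exact Subtype.ext (y.2.1 this)⟩
      invFun := fun g =>
        ⟨fun i => if h : i ∈ T then x i else (g ⟨i, Finset.mem_compl.2 h⟩ : ZMod n), by
          constructor
          · intro i j hij
            simp only at hij
            by_cases hi : i ∈ T <;> by_cases hj : j ∈ T
            · rw [dif_pos hi, dif_pos hj] at hij; exact hx hij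
            · rw [dif_pos hi, dif_neg hj] at hij
              exact absurd (Finset.mem_image_of_mem x hi)
                (by rw [hij]; exact Finset.mem_compl.1 (g ⟨j, Finset.mem_compl.2 hj⟩).2)
            · rw [dif_neg hi, dif_pos hj] at hij
              exact absurd (Finset.mem_image_of_mem x hj)
                (by rw [← hij]; exact Finset.mem_compl.1 (g ⟨i, Finset.mem_compl.2 hi⟩).2)
            · rw [dif_neg hi, dif_neg hj] at hij
              exact congrArg Subtype.val (g.injective (Subtype.ext hij))
          · intro i hi; simp only; rw [dif_pos hi]⟩
      left_inv := by
        rintro ⟨y, hy, hag⟩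
        apply Subtype.ext
        funext i
        by_cases h : i ∈ T
        · simp only [dif_pos h]; exact (hag i h).symm
        · simp only [dif_neg h]
          rfl
      right_inv := by
        intro g
        ext ⟨i, hi⟩
        simp only [Function.Embedding.coeFn_mk]
        exact dif_neg (Finset.mem_compl.1 hi) }
  rw [Fintype.card_congr e, Fintype.card_embedding_eq]
  have h1 : Fintype.card ↥(Tᶜ) = n - T.card := by
    rw [Fintype.card_coe, Finset.card_compl, Fintype.card_fin]
  have h2 : Fintype.card ↥((T.image x)ᶜ) = n - T.card := by
    rw [Fintype.card_coe, Finset.card_compl, ZMod.card,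
      Finset.card_image_of_injective _ hx]
  rw [h1, h2, Nat.descFactorial_self]

lemma sum_BT (n : ℕ) [NeZero n] (T : Finset (Fin n)) :
    ∑ r ∈ Finset.univ.filter (fun r : Fin n → ZMod n => ∀ i ∉ T, r i = 0),
      ‖fourierS n r‖ ^ 2
      = ((n.factorial : ℝ) * ((n - T.card).factorial * (n:ℝ)^T.card)) / ((n:ℝ)^n)^2 := by
  classical
  set S := Finset.univ.filter (fun x : Fin n → ZMod n => Function.Injective x) with hS
  set B := Finset.univ.filter (fun r : Fin n → ZMod n => ∀ i ∉ T, r i = 0) with hB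
  set ψ : AddChar (ZMod n) ℂ := ZMod.stdAddChar with hψ
  have habs : ∀ r : Fin n → ZMod n,
      ‖fourierS n r‖ ^ 2 = (fourierS n r * (starRingEnd ℂ) (fourierS n r)).re := by
    intro r
    rw [Complex.mul_conj, Complex.ofReal_re, Complex.sq_norm]
  rw [Finset.sum_congr rfl (fun r _ => habs r), ← Complex.re_sum]
  have key : ∑ r ∈ B, fourierS n r * (starRingEnd ℂ) (fourierS n r)
      = (((n.factorial : ℝ) * ((n - T.card).factorial * (n:ℝ)^T.card)) / ((n:ℝ)^n)^2 : ℝ) := by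
    have hf : ∀ r : Fin n → ZMod n,
        fourierS n r = ((n : ℂ) ^ n)⁻¹ * ∑ x ∈ S, ψ (-(∑ i, r i * x i)) := by
      intro r
      simp only [fourierS, hS, hψ]
      congr 1
      exact Finset.sum_congr rfl fun x _ => eZ_eq_stdAddChar n _
    have hconj : ∀ r : Fin n → ZMod n,
        (starRingEnd ℂ) (fourierS n r) = ((n : ℂ) ^ n)⁻¹ * ∑ x ∈ S, ψ (∑ i, r i * x i) := by
      intro r
      rw [hf, map_mul, map_sum]
      congr 1
      · simp
      · exact Finset.sum_congr rfl fun x _ => by rw [conj_stdAddChar, neg_neg]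
    have hprod : ∀ r : Fin n → ZMod n,
        fourierS n r * (starRingEnd ℂ) (fourierS n r)
        = ((n : ℂ) ^ n)⁻¹ * ((n : ℂ) ^ n)⁻¹ *
            ∑ x ∈ S, ∑ x' ∈ S, ψ (∑ i, r i * (x' i - x i)) := by
      intro r
      rw [hconj r, hf r, mul_mul_mul_comm, Finset.sum_mul_sum]
      congr 1
      refine Finset.sum_congr rfl fun x _ => Finset.sum_congr rfl fun x' _ => ?_
      rw [← AddChar.map_add_eq_mul]
      congr 1
      rw [neg_add_eq_sub, ← Finset.sum_sub_distrib]
      exact Finset.sum_congr rfl fun i _ => (mul_sub _ _ _).symm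
    rw [Finset.sum_congr rfl (fun r _ => hprod r), ← Finset.mul_sum]
    rw [Finset.sum_comm]
    have hswap : ∀ x ∈ S, ∑ r ∈ B, ∑ x' ∈ S, ψ (∑ i, r i * (x' i - x i))
        = ∑ x' ∈ S, ∑ r ∈ B, ψ (∑ i, r i * (x' i - x i)) := fun x _ => Finset.sum_comm
    rw [Finset.sum_congr rfl hswap]
    have hinner : ∀ x ∈ S, ∑ x' ∈ S, ∑ r ∈ B, ψ (∑ i, r i * (x' i - x i))
        = ((n - T.card).factorial : ℂ) * (n : ℂ) ^ T.card := by
      intro x hx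
      have hxinj : Function.Injective x := (Finset.mem_filter.1 hx).2
      have : ∀ x' ∈ S, ∑ r ∈ B, ψ (∑ i, r i * (x' i - x i))
          = if ∀ i ∈ T, x' i = x i then (n : ℂ) ^ T.card else 0 := by
        intro x' _
        rw [hB, hψ, sum_supported n T (fun i => x' i - x i)]
        congr 1
        simp [sub_eq_zero]
      rw [Finset.sum_congr rfl this, ← Finset.sum_filter, Finset.sum_const, hS,
        Finset.filter_filter, card_inj_ext n T x hxinj, nsmul_eq_mul]
    rw [Finset.sum_congr rfl hinner, Finset.sum_const, hS, card_inj_tuples n, nsmul_eq_mul]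
    have hn : (n : ℂ) ≠ 0 := Nat.cast_ne_zero.2 (NeZero.ne n)
    push_cast
    rw [eq_div_iff (pow_ne_zero 2 (pow_ne_zero n hn))]
    field_simp
  rw [key, Complex.ofReal_re]

lemma sum_biUnion_le' {ι α : Type*} [DecidableEq α] (s : Finset ι) (B : ι → Finset α)
    (f : α → ℝ) (hf : ∀ a, 0 ≤ f a) :
    ∑ a ∈ s.biUnion B, f a ≤ ∑ i ∈ s, ∑ a ∈ B i, f a := by
  classical
  induction s using Finset.induction_on with
  | empty => simp
  | insert a s ha ih =>
    rw [Finset.biUnion_insert, Finset.sum_insert ha]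
    have hun : ∑ x ∈ B a ∪ s.biUnion B, f x ≤ ∑ x ∈ B a, f x + ∑ x ∈ s.biUnion B, f x := by
      have := Finset.sum_union_inter (s₁ := B a) (s₂ := s.biUnion B) (f := f)
      have h0 : 0 ≤ ∑ x ∈ B a ∩ s.biUnion B, f x := Finset.sum_nonneg fun x _ => hf x
      linarith
    exact hun.trans (by linarith)

/-- Crude sparseval: the sum of `|\widehat{1_S}(χ)|²` over characters with at most `m`
nonzero coordinates is at most `(n^m/m!)(n!/nⁿ)²`. -/
theorem sparseval_crude (n m : ℕ) [NeZero n] (hm : m ≤ n) :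
    ∑ r ∈ Finset.univ.filter
        (fun r : Fin n → ZMod n => (Finset.univ.filter (fun i => r i ≠ 0)).card ≤ m),
      ‖fourierS n r‖ ^ 2 ≤
    ((n : ℝ) ^ m / m.factorial) * ((n.factorial : ℝ) / (n : ℝ) ^ n) ^ 2 := by
  classical
  set F : (Fin n → ZMod n) → ℝ := fun r => ‖fourierS n r‖ ^ 2 with hF
  have hFnn : ∀ r, 0 ≤ F r := fun r => sq_nonneg _
  set P := Finset.powersetCard m (univ : Finset (Fin n)) with hP
  set B : Finset (Fin n) → Finset (Fin n → ZMod n) :=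
    fun T => Finset.univ.filter (fun r => ∀ i ∉ T, r i = 0) with hBdef
  have hsub : Finset.univ.filter
        (fun r : Fin n → ZMod n => (Finset.univ.filter (fun i => r i ≠ 0)).card ≤ m)
      ⊆ P.biUnion B := by
    intro r hr
    rw [Finset.mem_filter] at hr
    obtain ⟨u, hu1, hu2, hu3⟩ := Finset.exists_subsuperset_card_eq
      (Finset.subset_univ (Finset.univ.filter (fun i => r i ≠ 0))) hr.2
      (by rw [Finset.card_univ, Fintype.card_fin]; exact hm)
    rw [Finset.mem_biUnion]
    refine ⟨u, ?_, ?_⟩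
    · rw [hP, Finset.mem_powersetCard]; exact ⟨hu2, hu3⟩
    · simp only [hBdef, Finset.mem_filter, Finset.mem_univ, true_and]
      intro i hi
      by_contra hri
      exact hi (hu1 (Finset.mem_filter.2 ⟨Finset.mem_univ i, hri⟩))
  have step1 : ∑ r ∈ Finset.univ.filter
        (fun r : Fin n → ZMod n => (Finset.univ.filter (fun i => r i ≠ 0)).card ≤ m), F r
      ≤ ∑ T ∈ P, ∑ r ∈ B T, F r :=
    le_trans (Finset.sum_le_sum_of_subset_of_nonneg hsub fun r _ _ => hFnn r)
      (sum_biUnion_le' P B F hFnn)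
  have step2 : ∑ T ∈ P, ∑ r ∈ B T, F r
      = (n.choose m : ℝ) *
          (((n.factorial : ℝ) * ((n - m).factorial * (n:ℝ)^m)) / ((n:ℝ)^n)^2) := by
    have : ∀ T ∈ P, ∑ r ∈ B T, F r
        = ((n.factorial : ℝ) * ((n - m).factorial * (n:ℝ)^m)) / ((n:ℝ)^n)^2 := by
      intro T hT
      have hTc : T.card = m := (Finset.mem_powersetCard.1 hT).2
      rw [hBdef, hF]
      rw [sum_BT n T, hTc]
    rw [Finset.sum_congr rfl this, Finset.sum_const, hP, Finset.card_powersetCard,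
      Finset.card_univ, Fintype.card_fin, nsmul_eq_mul]
  refine (step1.trans_eq step2).trans_eq ?_
  have key : (n.choose m : ℝ) * m.factorial * (n-m).factorial = n.factorial := by
    exact_mod_cast congrArg (Nat.cast : ℕ → ℝ) (Nat.choose_mul_factorial_mul_factorial hm)
  have h1 : (m.factorial : ℝ) ≠ 0 := Nat.cast_ne_zero.2 m.factorial_ne_zero
  have h2 : (n:ℝ)^n ≠ 0 := pow_ne_zero n (Nat.cast_ne_zero.2 (NeZero.ne n))
  field_simp
  linear_combination (n:ℝ) ^ m * key
end
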